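/- Let u : ℝ → ℂ be a C¹ loop with u(t) ≠ 0 for all t. Suppose the set Z = {t ∈ [0,1) : Im(u(t)) = 0} is finite and for every t ∈ Z the derivative of t ↦ Im(u(t)) is nonzero at t. Then ∑_{t ∈ Z} sign(Re(u(t))) · sign(deriv (fun s => Im(u s)) t) = 2 · (1/(2πi)) ∫_0^1 (deriv u t)/(u t) dt. -/

import Mathlib

open scoped BigOperators

lemma sign_pos_mul {c : ℝ} (hc : 0 < c) (x : ℝ) : Real.sign (c * x) = Real.sign x := by
  rcases lt_trichotomy x 0 with h | h | h
  · rw [Real.sign_of_neg h, Real.sign_of_neg (mul_neg_of_pos_of_neg hc h)]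
  · simp [h]
  · rw [Real.sign_of_pos h, Real.sign_of_pos (mul_pos hc h)]

lemma floor_eq_of_no_cross {φ : ℝ → ℝ} (hc : Continuous φ) {a b : ℝ} (hab : a ≤ b)
    (h : ∀ t ∈ Set.Icc a b, ¬∃ m : ℤ, φ t = m) : ⌊φ b⌋ = ⌊φ a⌋ := by
  by_contra hne
  rcases lt_or_gt_of_ne hne with hlt | hlt
  · -- ⌊φ b⌋ < ⌊φ a⌋ : m := ⌊φ a⌋, φ b < m ≤ φ a
    have h1 : φ b < (⌊φ a⌋ : ℝ) := by
      have := Int.lt_floor_add_one (φ b)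
      have h2 : (⌊φ b⌋ : ℝ) + 1 ≤ (⌊φ a⌋ : ℝ) := by exact_mod_cast Int.add_one_le_iff.2 hlt
      linarith
    have h2 : (⌊φ a⌋ : ℝ) ≤ φ a := Int.floor_le _
    obtain ⟨t, ht, hφt⟩ := intermediate_value_Icc' hab hc.continuousOn ⟨h1.le, h2⟩
    exact h t ht ⟨⌊φ a⌋, hφt⟩
  · have h1 : φ a < (⌊φ b⌋ : ℝ) := by
      have := Int.lt_floor_add_one (φ a)
      have h2 : (⌊φ a⌋ : ℝ) + 1 ≤ (⌊φ b⌋ : ℝ) := by exact_mod_cast Int.add_one_le_iff.2 hlt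
      linarith
    have h2 : (⌊φ b⌋ : ℝ) ≤ φ b := Int.floor_le _
    obtain ⟨t, ht, hφt⟩ := intermediate_value_Icc hab hc.continuousOn ⟨h1.le, h2⟩
    exact h t ht ⟨⌊φ b⌋, hφt⟩

lemma local_sign {φ : ℝ → ℝ} {t d : ℝ} (hd : HasDerivAt φ d t) (hd0 : d ≠ 0) :
    ∃ δ > 0, ∀ s, s ≠ t → |s - t| < δ →
      |φ s - φ t| < 1 ∧ 0 < (φ s - φ t) / (s - t) * d := by
  have h1 : Filter.Tendsto (slope φ t) (nhdsWithin t {t}ᶜ) (nhds d) :=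
    hasDerivAt_iff_tendsto_slope.1 hd
  have hdd : 0 < d * d := mul_self_pos.2 hd0
  have h2 : ∀ᶠ x in nhds d, 0 < x * d := by
    have hc : ContinuousAt (fun x : ℝ => x * d) d := (continuous_id.mul continuous_const).continuousAt
    have := hc.eventually_mem (s := Set.Ioi (0:ℝ)) (Ioi_mem_nhds hdd)
    filter_upwards [this] with x hx using hx
  have h3 : ∀ᶠ s in nhdsWithin t {t}ᶜ, 0 < slope φ t s * d := h1.eventually h2
  have h4 : ∀ᶠ s in nhds t, |φ s - φ t| < 1 := by
    have hct : ContinuousAt φ t := hd.continuousAt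
    have : ∀ᶠ s in nhds t, φ s ∈ Metric.ball (φ t) 1 :=
      hct.eventually_mem (Metric.ball_mem_nhds _ one_pos)
    filter_upwards [this] with s hs
    simpa [Real.dist_eq] using hs
  have h5 : ∀ᶠ s in nhdsWithin t {t}ᶜ,
      |φ s - φ t| < 1 ∧ 0 < (φ s - φ t) / (s - t) * d := by
    filter_upwards [h3, h4.filter_mono nhdsWithin_le_nhds] with s hs1 hs2
    refine ⟨hs2, ?_⟩
    rwa [slope_def_field] at hs1
  rw [eventually_nhdsWithin_iff] at h5
  rw [Metric.eventually_nhds_iff] at h5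
  obtain ⟨δ, hδ, h⟩ := h5
  exact ⟨δ, hδ, fun s hs hdist => h (by simpa [Real.dist_eq] using hdist) hs⟩

set_option maxHeartbeats 1000000 in
lemma claimA (φ : ℝ → ℝ) (hφ : Differentiable ℝ φ) (S : Finset ℝ) :
    ∀ (a b : ℝ), a < b →
    (¬∃ m : ℤ, φ a = m) → (¬∃ m : ℤ, φ b = m) →
    (∀ t, t ∈ S ↔ (t ∈ Set.Icc a b ∧ ∃ m : ℤ, φ t = m)) →
    (∀ t ∈ S, deriv φ t ≠ 0) →
    ∑ t ∈ S, Real.sign (deriv φ t) = ((⌊φ b⌋ - ⌊φ a⌋ : ℤ) : ℝ) := by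
  induction S using Finset.strongInduction with
  | _ S ih =>
  intro a b hab ha hb hchar hregS
  rcases S.eq_empty_or_nonempty with rfl | hne
  · have hfl : ⌊φ b⌋ = ⌊φ a⌋ := by
      refine floor_eq_of_no_cross hφ.continuous hab.le (fun t ht hm => ?_)
      exact (Finset.notMem_empty t) ((hchar t).2 ⟨ht, hm⟩)
    simp [hfl]
  · set t0 := S.min' hne with ht0def
    have ht0S : t0 ∈ S := S.min'_mem hne
    obtain ⟨ht0mem, m, hm⟩ := (hchar t0).1 ht0S
    have hd0 : deriv φ t0 ≠ 0 := hregS t0 ht0S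
    have hder : HasDerivAt φ (deriv φ t0) t0 := (hφ t0).hasDerivAt
    obtain ⟨δ, hδ, hloc⟩ := local_sign hder hd0
    have hat0 : a < t0 := lt_of_le_of_ne ht0mem.1 (by rintro rfl; exact ha ⟨m, hm⟩)
    have ht0b : t0 < b := lt_of_le_of_ne ht0mem.2 (by rintro rfl; exact hb ⟨m, hm⟩)
    -- choose c just to the right of t0
    classical
    set T : Finset ℝ := insert b (insert (t0 + δ) (S.filter (fun s => t0 < s))) with hT
    have hTne : T.Nonempty := ⟨b, by simp [hT]⟩
    set μ := T.min' hTne with hμdef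
    have hμgt : t0 < μ := by
      rw [hμdef]
      rw [Finset.lt_min'_iff]
      intro y hy
      simp only [hT, Finset.mem_insert, Finset.mem_filter] at hy
      rcases hy with rfl | rfl | ⟨_, h⟩
      · exact ht0b
      · linarith
      · exact h
    set c := (t0 + μ) / 2 with hcdef
    have hct0 : t0 < c := by rw [hcdef]; linarith
    have hcμ : c < μ := by rw [hcdef]; linarith
    have hμb : μ ≤ b := Finset.min'_le _ _ (by simp [hT])
    have hμδ : μ ≤ t0 + δ := Finset.min'_le _ _ (by simp [hT])
    have hcb : c < b := lt_of_lt_of_le hcμ hμb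
    have hcδ : |c - t0| < δ := by
      rw [abs_of_pos (by linarith)]; linarith
    have hcS : c ∉ S := by
      intro hcS
      have : c ∈ T := by simp only [hT, Finset.mem_insert, Finset.mem_filter]; tauto
      exact absurd (Finset.min'_le _ _ this) (not_le.2 hcμ)
    have hcZ : ¬∃ k : ℤ, φ c = k := fun hk =>
      hcS ((hchar c).2 ⟨⟨by linarith, hcb.le⟩, hk⟩)
    -- choose a' just to the left of t0
    set a' := (max a (t0 - δ) + t0) / 2 with ha'def
    have hmaxlt : max a (t0 - δ) < t0 := max_lt hat0 (by linarith)
    have ha'lt : a' < t0 := by rw [ha'def]; linarith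
    have haa' : a < a' := by
      have : a ≤ max a (t0 - δ) := le_max_left _ _
      rw [ha'def]; linarith
    have ha'δ : |a' - t0| < δ := by
      have : t0 - δ ≤ max a (t0 - δ) := le_max_right _ _
      rw [abs_of_neg (by linarith)]; rw [ha'def]; linarith
    have ha'S : a' ∉ S := fun h => absurd (S.min'_le _ h) (not_le.2 ha'lt)
    have ha'Z : ¬∃ k : ℤ, φ a' = k := fun hk =>
      ha'S ((hchar a').2 ⟨⟨haa'.le, by linarith⟩, hk⟩)
    -- floor φ a = floor φ a'
    have hfla : ⌊φ a'⌋ = ⌊φ a⌋ := by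
      refine floor_eq_of_no_cross hφ.continuous haa'.le (fun t ht hk => ?_)
      have htS : t ∈ S := (hchar t).2 ⟨⟨ht.1, by linarith [ht.2]⟩, hk⟩
      exact absurd (S.min'_le _ htS) (not_le.2 (lt_of_le_of_lt ht.2 ha'lt))
    -- local sign info
    obtain ⟨hc1, hc2⟩ := hloc c (ne_of_gt hct0) hcδ
    obtain ⟨ha1, ha2⟩ := hloc a' (ne_of_lt ha'lt) ha'δ
    have hc2' : 0 < (φ c - φ t0) * deriv φ t0 := by
      have hden : 0 < c - t0 := by linarith
      have h := mul_pos hc2 hden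
      rwa [mul_comm ((φ c - φ t0) / (c - t0)) (deriv φ t0), mul_assoc,
        div_mul_cancel₀ _ (ne_of_gt hden), mul_comm] at h
    have ha2' : (φ a' - φ t0) * deriv φ t0 < 0 := by
      have hden : a' - t0 < 0 := by linarith
      have h := mul_neg_of_pos_of_neg ha2 hden
      rwa [mul_comm ((φ a' - φ t0) / (a' - t0)) (deriv φ t0), mul_assoc,
        div_mul_cancel₀ _ (ne_of_lt hden), mul_comm] at h
    -- recursion on the rest
    have hsub : S.erase t0 ⊂ S := Finset.erase_ssubset ht0S
    have hchar' : ∀ t, t ∈ S.erase t0 ↔ (t ∈ Set.Icc c b ∧ ∃ k : ℤ, φ t = k) := by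
      intro t
      constructor
      · rintro ht
        have htS : t ∈ S := Finset.mem_of_mem_erase ht
        have htne : t ≠ t0 := Finset.ne_of_mem_erase ht
        have htmem := (hchar t).1 htS
        have ht0t : t0 < t := lt_of_le_of_ne (S.min'_le _ htS) (Ne.symm htne)
        have hct : c ≤ t := by
          by_contra hcont
          push_neg at hcont
          have : t ∈ T := by
            simp only [hT, Finset.mem_insert, Finset.mem_filter]
            exact Or.inr (Or.inr ⟨htS, ht0t⟩)
          have := Finset.min'_le _ _ this
          linarith
        exact ⟨⟨hct, htmem.1.2⟩, htmem.2⟩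
      · rintro ⟨htmem, hk⟩
        have htS : t ∈ S := (hchar t).2 ⟨⟨by linarith [htmem.1], htmem.2⟩, hk⟩
        refine Finset.mem_erase.2 ⟨?_, htS⟩
        intro heq; rw [heq] at htmem; linarith [htmem.1]
    have hrec := ih (S.erase t0) hsub c b hcb hcZ hb hchar'
      (fun t ht => hregS t (Finset.mem_of_mem_erase ht))
    rw [← Finset.add_sum_erase _ _ ht0S, hrec]
    -- now the arithmetic
    rcases hd0.lt_or_gt with hneg | hpos
    · -- deriv < 0 : φ c < m, floor c = m - 1 ; φ a' > m, floor a' = m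
      have hsgn : Real.sign (deriv φ t0) = -1 := Real.sign_of_neg hneg
      have hφc : φ c - φ t0 < 0 := by
        rcases lt_trichotomy (φ c - φ t0) 0 with h | h | h
        · exact h
        · rw [h] at hc2'; linarith
        · nlinarith
      have hφa' : 0 < φ a' - φ t0 := by
        rcases lt_trichotomy (φ a' - φ t0) 0 with h | h | h
        · nlinarith
        · rw [h] at ha2'; linarith
        · exact h
      have hfc : ⌊φ c⌋ = m - 1 := by
        rw [Int.floor_eq_iff, abs_lt] at *
        constructor
        · push_cast; linarith [hc1.1]
        · push_cast; linarith
      have hfa' : ⌊φ a'⌋ = m := by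
        rw [abs_lt] at ha1
        rw [Int.floor_eq_iff]
        constructor
        · push_cast; linarith
        · push_cast; linarith [ha1.2]
      rw [hsgn, hfc, ← hfla, hfa']
      push_cast; ring
    · -- deriv > 0
      have hsgn : Real.sign (deriv φ t0) = 1 := Real.sign_of_pos hpos
      have hφc : 0 < φ c - φ t0 := by
        rcases lt_trichotomy (φ c - φ t0) 0 with h | h | h
        · nlinarith
        · rw [h] at hc2'; linarith
        · exact h
      have hφa' : φ a' - φ t0 < 0 := by
        rcases lt_trichotomy (φ a' - φ t0) 0 with h | h | h
        · exact h
        · rw [h] at ha2'; linarith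
        · nlinarith
      have hfc : ⌊φ c⌋ = m := by
        rw [abs_lt] at hc1
        rw [Int.floor_eq_iff]
        constructor
        · push_cast; linarith
        · push_cast; linarith [hc1.2]
      have hfa' : ⌊φ a'⌋ = m - 1 := by
        rw [abs_lt] at ha1
        rw [Int.floor_eq_iff]
        constructor
        · push_cast; linarith [ha1.1]
        · push_cast; linarith
      rw [hsgn, hfc, ← hfla, hfa']
      push_cast; ring

set_option maxHeartbeats 1000000 in
lemma countLemma (φ : ℝ → ℝ) (hφ : Differentiable ℝ φ) (c : ℤ)
    (hper : ∀ t, φ (t + 1) = φ t + c) (Z : Finset ℝ)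
    (hZchar : ∀ t, t ∈ Z ↔ (t ∈ Set.Ico (0:ℝ) 1 ∧ ∃ m : ℤ, φ t = m)) 
    (hregZ : ∀ t ∈ Z, deriv φ t ≠ 0) :
    ∑ t ∈ Z, Real.sign (deriv φ t) = (c : ℝ) := by
  classical
  -- derivative is 1-periodic
  have hderper : ∀ t, deriv φ (t + 1) = deriv φ t := by
    intro t
    have h1 : deriv (fun x => φ (x + 1)) t = deriv φ (t + 1) := deriv_comp_add_const φ 1 t
    have h2 : (fun x => φ (x + 1)) = fun x => φ x + (c : ℝ) := funext hper
    rw [h2] at h1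
    rw [← h1]
    simp
  -- pick a point that is not a crossing
  obtain ⟨a, haI, haZ⟩ := (Set.Ioo_infinite (by norm_num : (0:ℝ) < 1)).exists_notMem_finset Z
  have ha0 : 0 < a := haI.1
  have ha1 : a < 1 := haI.2
  have haZ' : ¬∃ m : ℤ, φ a = m := fun hm =>
    haZ ((hZchar a).2 ⟨⟨ha0.le, ha1⟩, hm⟩)
  have hbZ' : ¬∃ m : ℤ, φ (a + 1) = m := by
    rintro ⟨m, hm⟩
    rw [hper a] at hm
    exact haZ' ⟨m - c, by push_cast; linarith⟩
  -- the shifted crossing set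
  set f : ℝ → ℝ := fun t => if t < a then t + 1 else t with hf
  have hinj : Set.InjOn f Z := by
    intro x hx y hy hxy
    have hxI := ((hZchar x).1 hx).1
    have hyI := ((hZchar y).1 hy).1
    simp only [hf] at hxy
    split_ifs at hxy with h1 h2 h2 <;> linarith [hxI.1, hxI.2, hyI.1, hyI.2]
  set S : Finset ℝ := Z.image f with hS
  have hScharA : ∀ t, t ∈ S ↔ (t ∈ Set.Icc a (a + 1) ∧ ∃ m : ℤ, φ t = m) := by
    intro t
    constructor
    · intro ht
      obtain ⟨z, hz, rfl⟩ := Finset.mem_image.1 ht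
      obtain ⟨⟨hz0, hz1⟩, m, hm⟩ := (hZchar z).1 hz
      have hza : z ≠ a := fun h => haZ (h ▸ hz)
      simp only [hf]
      split_ifs with h
      · exact ⟨⟨by linarith, by linarith⟩, ⟨m + c, by rw [hper z, hm]; push_cast; ring⟩⟩
      · push_neg at h
        exact ⟨⟨h, by linarith⟩, ⟨m, hm⟩⟩
    · rintro ⟨⟨hta, htb⟩, m, hm⟩
      have htne : t ≠ a := fun h => haZ' (h ▸ ⟨m, hm⟩)
      have htne' : t ≠ a + 1 := fun h => hbZ' (h ▸ ⟨m, hm⟩)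
      rcases lt_or_ge t 1 with ht1 | ht1
      · have htZ : t ∈ Z := (hZchar t).2 ⟨⟨by linarith, ht1⟩, ⟨m, hm⟩⟩
        refine Finset.mem_image.2 ⟨t, htZ, ?_⟩
        simp only [hf, if_neg (not_lt.2 (lt_of_le_of_ne hta (Ne.symm htne)).le)]
      · have htZ : t - 1 ∈ Z := by
          refine (hZchar (t - 1)).2 ⟨⟨by linarith, by cases lt_or_ge (t-1) 1 with
            | inl h => exact h
            | inr h => exact absurd (by linarith : a + 1 < t) (by linarith [lt_of_le_of_ne htb htne'])⟩,
            ⟨m - c, ?_⟩⟩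
          have := hper (t - 1)
          rw [sub_add_cancel] at this
          push_cast
          linarith [hm ▸ this]
        refine Finset.mem_image.2 ⟨t - 1, htZ, ?_⟩
        have : t - 1 < a := by
          have hb' : t ≤ a + 1 := htb
          have : t < a + 1 := lt_of_le_of_ne hb' htne'
          linarith
        simp only [hf, if_pos this]
        ring
    -- sums agree
  have hsum : ∑ t ∈ S, Real.sign (deriv φ t) = ∑ t ∈ Z, Real.sign (deriv φ t) := by
    rw [hS, Finset.sum_image (fun x hx y hy => hinj hx hy)]
    refine Finset.sum_congr rfl (fun z hz => ?_)
    simp only [hf]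
    split_ifs with h
    · rw [hderper z]
    · rfl
  have hregS : ∀ t ∈ S, deriv φ t ≠ 0 := by
    intro t ht
    obtain ⟨z, hz, rfl⟩ := Finset.mem_image.1 ht
    simp only [hf]
    split_ifs with h
    · rw [hderper z]; exact hregZ z hz
    · exact hregZ z hz
  have hmain := claimA φ hφ S a (a + 1) (by linarith) haZ' hbZ' hScharA hregS
  rw [hsum] at hmain
  rw [hmain, hper a, Int.floor_add_intCast]
  push_cast
  ring

set_option maxHeartbeats 2000000 in
/-- Crossing formula: twice the winding number of a `C¹` loop avoiding `0` equals the
signed count of its transversal crossings of the real axis. -/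
theorem crossing_formula (u : ℝ → ℂ) (hu : ContDiff ℝ 1 u)
    (hper : ∀ t, u (t + 1) = u t) (hne : ∀ t, u t ≠ 0)
    (hZ : {t ∈ Set.Ico (0:ℝ) 1 | (u t).im = 0}.Finite)
    (hreg : ∀ t ∈ {t ∈ Set.Ico (0:ℝ) 1 | (u t).im = 0},
      deriv (fun s => (u s).im) t ≠ 0) :
    ((∑ t ∈ hZ.toFinset,
        Real.sign ((u t).re) * Real.sign (deriv (fun s => (u s).im) t) : ℝ) : ℂ)
      = 2 * ((1 / (2 * (Real.pi : ℂ) * Complex.I)) *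
          ∫ t in (0:ℝ)..1, deriv u t / u t) := by
  classical
  have hud : Differentiable ℝ u := hu.differentiable one_ne_zero
  have hu' : Continuous (deriv u) := hu.continuous_deriv le_rfl
  set g : ℝ → ℂ := fun t => deriv u t / u t with hgdef
  have hgc : Continuous g := hu'.div hud.continuous hne
  set w : ℝ → ℂ := fun t => ∫ s in (0:ℝ)..t, g s with hwdef
  have hw : ∀ t, HasDerivAt w (g t) t := fun t => (hgc.integral_hasStrictDerivAt 0 t).hasDerivAt
  have hw0 : w 0 = 0 := intervalIntegral.integral_same
  have hkey : ∀ t, u t = u 0 * Complex.exp (w t) := by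
    have hF : ∀ t, HasDerivAt (fun t => u t * Complex.exp (-w t)) 0 t := by
      intro t
      have h2 : HasDerivAt (fun t => Complex.exp (-w t)) (Complex.exp (-w t) * (-g t)) t :=
        ((hw t).neg).cexp
      have h3 : HasDerivAt (fun t => u t * Complex.exp (-w t))
          (deriv u t * Complex.exp (-w t) + u t * (Complex.exp (-w t) * -g t)) t :=
        ((hud t).hasDerivAt).mul h2
      convert h3 using 1
      have hug : u t * g t = deriv u t := by
        simp only [hgdef]
        rw [mul_comm]
        exact div_mul_cancel₀ _ (hne t)
      rw [← hug]; ring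
    have hconst := is_const_of_deriv_eq_zero (𝕜 := ℝ)
      (fun t => (hF t).differentiableAt) (fun t => (hF t).deriv)
    intro t
    have h := hconst t 0
    rw [hw0] at h
    simp only [neg_zero, Complex.exp_zero, mul_one] at h
    calc u t = u t * Complex.exp (-w t) * Complex.exp (w t) := by
          rw [mul_assoc, ← Complex.exp_add]; simp
      _ = u 0 * Complex.exp (w t) := by rw [h]
  have hu1 : u 1 = u 0 := by simpa using hper 0
  have hexp1 : Complex.exp (w 1) = 1 := by
    have h := hkey 1
    rw [hu1] at h
    have h2 : u 0 * 1 = u 0 * Complex.exp (w 1) := by rw [mul_one, ← h]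
    exact (mul_left_cancel₀ (hne 0) h2).symm
  obtain ⟨n, hn⟩ := Complex.exp_eq_one_iff.1 hexp1
  -- periodicity
  have hgper : ∀ t, g (t + 1) = g t := by
    intro t
    have h1 : HasDerivAt (fun s => u (s + 1)) (deriv u (t + 1)) t :=
      HasDerivAt.comp_add_const t 1 ((hud (t + 1)).hasDerivAt)
    have heq : (fun s => u (s + 1)) = u := funext hper
    rw [heq] at h1
    have h2 := h1.unique ((hud t).hasDerivAt)
    simp only [hgdef]
    rw [h2, hper t]
  have hint : ∀ a b : ℝ, IntervalIntegrable g MeasureTheory.volume a b :=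
    fun a b => hgc.intervalIntegrable a b
  have hwper : ∀ t, w (t + 1) = w t + w 1 := by
    intro t
    have hsplit : w t + ∫ s in t..(t + 1), g s = w (t + 1) :=
      intervalIntegral.integral_add_adjacent_intervals (hint 0 t) (hint t (t + 1))
    have hgP : Function.Periodic g 1 := hgper
    have hshift := hgP.intervalIntegral_add_eq t 0
    rw [zero_add] at hshift
    rw [← hsplit, hshift]
  -- polar decomposition
  have hr0 : 0 < ‖u 0‖ := norm_pos_iff.2 (hne 0)
  set θ : ℝ → ℝ := fun t => Complex.arg (u 0) + (w t).im with hθdef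
  set ρ : ℝ → ℝ := fun t => ‖u 0‖ * Real.exp ((w t).re) with hρdef
  have hρpos : ∀ t, 0 < ρ t := fun t => mul_pos hr0 (Real.exp_pos _)
  have hupolar : ∀ t, u t = (ρ t : ℂ) * Complex.exp ((θ t : ℝ) * Complex.I) := by
    intro t
    rw [hkey t]
    conv_lhs => rw [← Complex.norm_mul_exp_arg_mul_I (u 0)]
    have h1 : ((ρ t : ℝ) : ℂ) = (‖u 0‖ : ℂ) * Complex.exp (((w t).re : ℂ)) := by
      rw [hρdef]; push_cast [Complex.ofReal_exp]; ring
    have h2 : ((θ t : ℝ) : ℂ) * Complex.I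
        = (Complex.arg (u 0) : ℂ) * Complex.I + ((w t).im : ℂ) * Complex.I := by
      rw [hθdef]; push_cast; ring
    have h3 : w t = ((w t).re : ℂ) + ((w t).im : ℂ) * Complex.I := (Complex.re_add_im _).symm
    rw [h1, h2, Complex.exp_add]
    conv_lhs => rw [h3, Complex.exp_add]
    ring
  have him : ∀ t, (u t).im = ρ t * Real.sin (θ t) := by
    intro t
    rw [hupolar t]
    simp [Complex.mul_im, Complex.exp_ofReal_mul_I_im, Complex.exp_ofReal_mul_I_re]
  have hre : ∀ t, (u t).re = ρ t * Real.cos (θ t) := by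
    intro t
    rw [hupolar t]
    simp [Complex.mul_re, Complex.exp_ofReal_mul_I_im, Complex.exp_ofReal_mul_I_re]
  -- derivatives
  have hwim : ∀ t, HasDerivAt (fun t => (w t).im) ((g t).im) t := fun t =>
    (Complex.imCLM.hasFDerivAt.comp_hasDerivAt t (hw t))
  have hwre : ∀ t, HasDerivAt (fun t => (w t).re) ((g t).re) t := fun t =>
    (Complex.reCLM.hasFDerivAt.comp_hasDerivAt t (hw t))
  have hθd : ∀ t, HasDerivAt θ ((g t).im) t := fun t =>
    (hwim t).const_add (Complex.arg (u 0))
  have hρd : ∀ t, HasDerivAt ρ (ρ t * (g t).re) t := by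
    intro t
    have h : HasDerivAt (fun y => ‖u 0‖ * Real.exp (w y).re)
        (‖u 0‖ * (Real.exp (w t).re * (g t).re)) t :=
      ((hwre t).exp).const_mul (‖u 0‖)
    convert h using 1
    rw [hρdef]; ring
  set φ : ℝ → ℝ := fun t => θ t / Real.pi with hφdef
  have hφd : ∀ t, HasDerivAt φ ((g t).im / Real.pi) t := fun t => (hθd t).div_const Real.pi
  have hφdiff : Differentiable ℝ φ := fun t => (hφd t).differentiableAt
  have hderφ : ∀ t, deriv φ t = (g t).im / Real.pi := fun t => (hφd t).deriv
  have hw1im : (w 1).im = 2 * Real.pi * n := by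
    rw [hn]
    simp [Complex.mul_im, Complex.mul_re]
    ring
  have hφper : ∀ t, φ (t + 1) = φ t + ((2 * n : ℤ) : ℝ) := by
    intro t
    simp only [hφdef, hθdef]
    rw [hwper t, Complex.add_im, hw1im]
    field_simp
    push_cast
    ring
  -- derivative of Im u
  have hImd : ∀ t, HasDerivAt (fun s => (u s).im)
      (ρ t * (g t).re * Real.sin (θ t) + ρ t * (Real.cos (θ t) * (g t).im)) t := by
    intro t
    have h1 := (hρd t).mul ((Real.hasDerivAt_sin (θ t)).comp t (hθd t))
    have heq : (fun s => (u s).im) = fun s => ρ s * Real.sin (θ s) := funext him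
    rw [heq]
    exact h1
  -- crossing set characterization
  have hmemsin : ∀ t, (u t).im = 0 ↔ Real.sin (θ t) = 0 := by
    intro t
    rw [him t]
    constructor
    · intro h
      rcases mul_eq_zero.1 h with h' | h'
      · exact absurd h' (ne_of_gt (hρpos t))
      · exact h'
    · intro h; rw [h, mul_zero]
  have hZchar : ∀ t, t ∈ hZ.toFinset ↔ (t ∈ Set.Ico (0:ℝ) 1 ∧ ∃ m : ℤ, φ t = m) := by
    intro t
    rw [Set.Finite.mem_toFinset]
    simp only [Set.mem_setOf_eq, Set.mem_sep_iff]
    constructor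
    · rintro ⟨htI, him0⟩
      refine ⟨htI, ?_⟩
      obtain ⟨k, hk⟩ := Real.sin_eq_zero_iff.1 ((hmemsin t).1 him0)
      refine ⟨k, ?_⟩
      simp only [hφdef]
      rw [← hk]
      field_simp
    · rintro ⟨htI, k, hk⟩
      refine ⟨htI, ?_⟩
      rw [hmemsin t]
      have hθk : θ t = k * Real.pi := by
        simp only [hφdef] at hk
        field_simp at hk
        linarith
      rw [hθk]
      exact Real.sin_int_mul_pi k
  -- deriv of Im u at crossings
  have hderIm : ∀ t, Real.sin (θ t) = 0 →
      deriv (fun s => (u s).im) t = ρ t * (Real.cos (θ t) * (g t).im) := by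
    intro t hsin
    rw [(hImd t).deriv, hsin]
    ring
  -- regularity for φ
  have hregφ : ∀ t ∈ hZ.toFinset, deriv φ t ≠ 0 := by
    intro t ht
    have htmem := Set.Finite.mem_toFinset hZ |>.1 ht
    have hsin : Real.sin (θ t) = 0 := (hmemsin t).1 htmem.2
    have hD := hreg t htmem
    rw [hderIm t hsin] at hD
    have himg : (g t).im ≠ 0 := by
      intro h; rw [h, mul_zero, mul_zero] at hD; exact hD rfl
    rw [hderφ t]
    exact div_ne_zero himg Real.pi_ne_zero
  -- termwise equality
  have hterm : ∀ t ∈ hZ.toFinset,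
      Real.sign ((u t).re) * Real.sign (deriv (fun s => (u s).im) t)
        = Real.sign (deriv φ t) := by
    intro t ht
    have htmem := Set.Finite.mem_toFinset hZ |>.1 ht
    have hsin : Real.sin (θ t) = 0 := (hmemsin t).1 htmem.2
    have hsφ : Real.sign (deriv φ t) = Real.sign ((g t).im) := by
      rw [hderφ t, div_eq_mul_inv, mul_comm]
      exact sign_pos_mul (inv_pos.2 Real.pi_pos) _
    rw [hderIm t hsin, hre t, hsφ]
    rcases Real.sin_eq_zero_iff_cos_eq.1 hsin with hcos | hcos
    · rw [hcos, mul_one, one_mul, Real.sign_of_pos (hρpos t), one_mul]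
      exact sign_pos_mul (hρpos t) _
    · rw [hcos]
      have h1 : ρ t * (-1) = -(ρ t) := by ring
      have h2 : ρ t * (-1 * (g t).im) = ρ t * (-(g t).im) := by ring
      rw [h1, h2, Real.sign_neg, Real.sign_of_pos (hρpos t),
        sign_pos_mul (hρpos t), Real.sign_neg]
      ring
  -- assemble
  have hsum := countLemma φ hφdiff (2 * n) hφper hZ.toFinset hZchar hregφ
  have hLHS : (∑ t ∈ hZ.toFinset,
      Real.sign ((u t).re) * Real.sign (deriv (fun s => (u s).im) t))
      = ((2 * n : ℤ) : ℝ) := by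
    rw [Finset.sum_congr rfl hterm, hsum]
  rw [hLHS]
  rw [show (∫ t in (0:ℝ)..1, g t) = w 1 from rfl, hn]
  have hπ : (Real.pi : ℂ) ≠ 0 := by
    exact_mod_cast Complex.ofReal_ne_zero.2 Real.pi_ne_zero
  have hI : Complex.I ≠ 0 := Complex.I_ne_zero
  push_cast
  field_simp
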